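/- Let R and S be finite commutative rings, let r be a positive natural number, and let m be a natural number. Then ∑ over all r-tuples ((a₁,b₁), …, (a_r,b_r)) of elements of R × S of card((R × S) ⧸ span{(a₁,b₁)⋯(a_r,b_r)})^m equals ( ∑ over all r-tuples (a₁, …, a_r) of elements of R of card(R ⧸ span{a₁⋯a_r})^m ) · ( ∑ over all r-tuples (b₁, …, b_r) of elements of S of card(S ⧸ span{b₁⋯b_r})^m ), where span{x} denotes the principal ideal generated by x and card denotes the cardinality of the quotient ring. -/

import Mathlib

lemma card_quot_prod (R S : Type*) [CommRing R] [CommRing S] (a : R) (b : S) :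
    Nat.card ((R × S) ⧸ Ideal.span {(a, b)})
      = Nat.card (R ⧸ Ideal.span {a}) * Nat.card (S ⧸ Ideal.span {b}) := by
  let f : R × S →+* (R ⧸ Ideal.span {a}) × (S ⧸ Ideal.span {b}) :=
    RingHom.prod ((Ideal.Quotient.mk _).comp (RingHom.fst R S))
      ((Ideal.Quotient.mk _).comp (RingHom.snd R S))
  have hsurj : Function.Surjective f := by
    rintro ⟨x, y⟩
    obtain ⟨x, rfl⟩ := Ideal.Quotient.mk_surjective x
    obtain ⟨y, rfl⟩ := Ideal.Quotient.mk_surjective y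
    exact ⟨(x, y), rfl⟩
  have hker : RingHom.ker f = Ideal.span {(a, b)} := by
    ext ⟨x, y⟩
    simp only [RingHom.mem_ker, f, RingHom.prod_apply, RingHom.comp_apply, RingHom.coe_fst,
      RingHom.coe_snd, Prod.mk_eq_zero, Ideal.Quotient.eq_zero_iff_mem,
      Ideal.mem_span_singleton]
    constructor
    · rintro ⟨⟨c, rfl⟩, ⟨d, rfl⟩⟩
      exact ⟨(c, d), rfl⟩
    · rintro ⟨⟨c, d⟩, h⟩
      rw [Prod.ext_iff] at h
      exact ⟨⟨c, h.1⟩, ⟨d, h.2⟩⟩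
  have e := RingHom.quotientKerEquivOfSurjective hsurj
  have e := (Ideal.quotEquivOfEq hker.symm).trans e
  rw [Nat.card_congr e.toEquiv, Nat.card_prod]

theorem stmt_17 (R S : Type*) [CommRing R] [CommRing S] [Fintype R] [Fintype S]
    (r : ℕ) (hr : 0 < r) (m : ℕ) :
    (∑ k : Fin r → R × S, Nat.card ((R × S) ⧸ Ideal.span {∏ i, k i}) ^ m)
      = (∑ a : Fin r → R, Nat.card (R ⧸ Ideal.span {∏ i, a i}) ^ m)
        * (∑ b : Fin r → S, Nat.card (S ⧸ Ideal.span {∏ i, b i}) ^ m) := by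
  rw [Finset.sum_mul_sum, ← Fintype.sum_prod_type']
  apply Fintype.sum_equiv (Equiv.arrowProdEquivProdArrow (Fin r) (fun _ => R) (fun _ => S))
  intro k
  have : (∏ i, k i) = (∏ i, (k i).1, ∏ i, (k i).2) := by
    exact Prod.ext Prod.fst_prod Prod.snd_prod
  rw [this, card_quot_prod, mul_pow]
  rfl
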